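/- arXiv:2009.05686 — 2 statements merged into one kernel-verified Lean document; each statement's English description precedes it below -/
import Mathlib

section
/- Let A be an n×n real matrix, B an n×m real matrix, Q a symmetric n×n real matrix, R a symmetric invertible m×m real matrix, and P a symmetric n×n real matrix satisfying the Riccati equation Q + AᵀP + PA − PBR⁻¹BᵀP = 0, with K = R⁻¹BᵀP. Suppose x : ℝ → ℝⁿ is differentiable and u : ℝ → ℝᵐ is such that x′(t) = A·x(t) + B·u(t) for all t. Then for all t, the function t ↦ x(t)ᵀP·x(t) is differentiable with derivative −x(t)ᵀQ·x(t) − u(t)ᵀR·u(t) + (u(t) + K·x(t))ᵀR·(u(t) + K·x(t)). -/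
open Matrix

private lemma flipDP {a b : ℕ} (M : Matrix (Fin a) (Fin b) ℝ) (v : Fin b → ℝ) (y : Fin a → ℝ) :
    (M *ᵥ v) ⬝ᵥ y = v ⬝ᵥ (Mᵀ *ᵥ y) := by
  rw [dotProduct_mulVec, vecMul_transpose]

theorem stmt_11 (n m : ℕ) (A : Matrix (Fin n) (Fin n) ℝ)
    (B : Matrix (Fin n) (Fin m) ℝ) (Q : Matrix (Fin n) (Fin n) ℝ) (hQ : Q.IsSymm)
    (R : Matrix (Fin m) (Fin m) ℝ) (hR : R.IsSymm) (hRinv : IsUnit R.det)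
    (P : Matrix (Fin n) (Fin n) ℝ) (hP : P.IsSymm)
    (hRic : Q + Aᵀ * P + P * A - P * B * R⁻¹ * Bᵀ * P = 0)
    (K : Matrix (Fin m) (Fin n) ℝ) (hK : K = R⁻¹ * Bᵀ * P)
    (x : ℝ → Fin n → ℝ) (u : ℝ → Fin m → ℝ)
    (hx : ∀ t : ℝ, HasDerivAt x (A *ᵥ x t + B *ᵥ u t) t) :
    ∀ t : ℝ,
      HasDerivAt (fun s : ℝ => x s ⬝ᵥ (P *ᵥ x s))
        (-(x t ⬝ᵥ (Q *ᵥ x t)) - u t ⬝ᵥ (R *ᵥ u t)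
          + (u t + K *ᵥ x t) ⬝ᵥ (R *ᵥ (u t + K *ᵥ x t))) t := by
  intro t
  set x' : Fin n → ℝ := A *ᵥ x t + B *ᵥ u t with hx'
  have hc : ∀ i, HasDerivAt (fun s => x s i) (x' i) t := hasDerivAt_pi.mp (hx t)
  have hsum : HasDerivAt (fun s : ℝ => ∑ i, ∑ j, x s i * (P i j * x s j))
      (∑ i, ∑ j, (x' i * (P i j * x t j) + x t i * (P i j * x' j))) t := by
    refine HasDerivAt.fun_sum fun i _ => ?_
    refine HasDerivAt.fun_sum fun j _ => ?_
    exact (hc i).mul ((hc j).const_mul (P i j))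
  have hfun : (fun s : ℝ => ∑ i, ∑ j, x s i * (P i j * x s j))
      = fun s : ℝ => x s ⬝ᵥ (P *ᵥ x s) := by
    funext s
    simp [dotProduct, mulVec, Finset.mul_sum]
  rw [hfun] at hsum
  have hval : (∑ i, ∑ j, (x' i * (P i j * x t j) + x t i * (P i j * x' j)))
      = x' ⬝ᵥ (P *ᵥ x t) + x t ⬝ᵥ (P *ᵥ x') := by
    simp [dotProduct, mulVec, Finset.mul_sum, Finset.sum_add_distrib]
  rw [hval] at hsum
  convert hsum using 1
  -- matrix identities
  have hRR : R * R⁻¹ = 1 := mul_nonsing_inv R hRinv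
  have hRK : R * K = Bᵀ * P := by
    rw [hK, ← Matrix.mul_assoc, ← Matrix.mul_assoc, hRR, Matrix.one_mul]
  have hKR : Kᵀ * R = P * B := by
    have hRinvT : (R⁻¹)ᵀ = R⁻¹ := by
      rw [Matrix.transpose_nonsing_inv, hR.eq]
    rw [hK]
    simp only [Matrix.transpose_mul, Matrix.transpose_transpose, hP.eq, hRinvT]
    rw [Matrix.mul_assoc, Matrix.mul_assoc, Matrix.nonsing_inv_mul R hRinv, Matrix.mul_one]
  have hKT : Kᵀ = P * B * R⁻¹ := by
    rw [hK]
    simp only [Matrix.transpose_mul, Matrix.transpose_transpose, hP.eq]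
    rw [show R⁻¹ᵀ = R⁻¹ by rw [Matrix.transpose_nonsing_inv, hR.eq]]
    rw [← Matrix.mul_assoc]
  have hKRK : Kᵀ * (R * K) = P * B * R⁻¹ * Bᵀ * P := by
    rw [hRK, hKT]
    simp only [Matrix.mul_assoc]
  have hAP : Aᵀ * P + P * A = P * B * R⁻¹ * Bᵀ * P - Q := by
    rw [eq_sub_iff_add_eq, ← sub_eq_zero, ← hRic]
    abel
  rw [hx']
  simp only [Matrix.mulVec_add, add_dotProduct, dotProduct_add, flipDP,
    Matrix.mulVec_mulVec, hRK, hKRK, hKT]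
  rw [show P * B * R⁻¹ * R = P * B by
        rw [Matrix.mul_assoc, Matrix.nonsing_inv_mul R hRinv, Matrix.mul_one],
      show P * B * R⁻¹ * (Bᵀ * P) = P * B * R⁻¹ * Bᵀ * P from (Matrix.mul_assoc _ _ _).symm]
  have hsplit : x t ⬝ᵥ (Aᵀ * P) *ᵥ x t + x t ⬝ᵥ (P * A) *ᵥ x t
      = x t ⬝ᵥ (P * B * R⁻¹ * Bᵀ * P) *ᵥ x t - x t ⬝ᵥ Q *ᵥ x t := by
    rw [← dotProduct_add, ← Matrix.add_mulVec, hAP, Matrix.sub_mulVec,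
      dotProduct_sub]
  linarith [hsplit]
end

section
/- Let A, B, Q, R, P, K be as follows: A an n×n real matrix, B an n×m real matrix, Q a symmetric positive semidefinite n×n real matrix, R a symmetric positive definite m×m real matrix, P a symmetric n×n real matrix satisfying Q + AᵀP + PA − PBR⁻¹BᵀP = 0, and K = R⁻¹BᵀP. Suppose x : ℝ → ℝⁿ is differentiable, u : ℝ → ℝᵐ is continuous, x′(t) = A·x(t) + B·u(t) for all t ≥ 0, the function t ↦ x(t)ᵀQ·x(t) + u(t)ᵀR·u(t) is integrable on [0,∞), and x(t)ᵀP·x(t) → 0 as t → ∞. Then ∫₀^∞ (x(t)ᵀQ·x(t) + u(t)ᵀR·u(t)) dt ≥ x(0)ᵀP·x(0). -/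
open Matrix

section helpers

lemma dp1 {n m : ℕ} (M : Matrix (Fin n) (Fin m) ℝ) (w : Fin m → ℝ) (v : Fin n → ℝ) :
    (M *ᵥ w) ⬝ᵥ v = w ⬝ᵥ (Mᵀ *ᵥ v) := by
  rw [dotProduct_comm, dotProduct_mulVec, mulVec_transpose, dotProduct_comm]

lemma key (n m : ℕ) (A : Matrix (Fin n) (Fin n) ℝ)
    (B : Matrix (Fin n) (Fin m) ℝ) (Q : Matrix (Fin n) (Fin n) ℝ)
    (R : Matrix (Fin m) (Fin m) ℝ) (hR : R.IsSymm)
    (hRd : R.PosDef) (P : Matrix (Fin n) (Fin n) ℝ) (hP : P.IsSymm)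
    (hRic : Q + Aᵀ * P + P * A - P * B * R⁻¹ * Bᵀ * P = 0)
    (K : Matrix (Fin m) (Fin n) ℝ) (hK : K = R⁻¹ * Bᵀ * P)
    (xv : Fin n → ℝ) (uv : Fin m → ℝ) :
    (A *ᵥ xv + B *ᵥ uv) ⬝ᵥ (P *ᵥ xv) + xv ⬝ᵥ (P *ᵥ (A *ᵥ xv + B *ᵥ uv))
      = (uv + K *ᵥ xv) ⬝ᵥ (R *ᵥ (uv + K *ᵥ xv))
        - (xv ⬝ᵥ (Q *ᵥ xv) + uv ⬝ᵥ (R *ᵥ uv)) := by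
  have hdet : IsUnit R.det := isUnit_iff_ne_zero.mpr hRd.det_pos.ne'
  have hRinv : R * R⁻¹ = 1 := mul_nonsing_inv R hdet
  have hRiSymm : (R⁻¹)ᵀ = R⁻¹ := by rw [transpose_nonsing_inv, hR.eq]
  have hRK : R * K = Bᵀ * P := by
    rw [hK]; simp only [← Matrix.mul_assoc, hRinv, Matrix.one_mul]
  have hKt : Kᵀ = P * B * R⁻¹ := by
    rw [hK, transpose_mul, transpose_mul, hRiSymm, hP.eq, transpose_transpose]
    simp only [← Matrix.mul_assoc]
  have hKRK : Kᵀ * (R * K) = P * B * R⁻¹ * Bᵀ * P := by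
    rw [hRK, hKt]; simp only [← Matrix.mul_assoc]
  have hRic' : Aᵀ * P + P * A = P * B * R⁻¹ * Bᵀ * P - Q := by
    rw [← sub_eq_zero, ← hRic]; abel
  simp only [mulVec_add, add_dotProduct, dotProduct_add, dp1, mulVec_mulVec,
    transpose_mul, hP.eq]
  have hRinv' : R⁻¹ * R = 1 := nonsing_inv_mul R hdet
  have hKtR : Kᵀ * R = P * B := by
    rw [hKt, Matrix.mul_assoc, hRinv', Matrix.mul_one]
  rw [hKRK, hRK, hKtR]
  have hsum : xv ⬝ᵥ (Aᵀ * P) *ᵥ xv + xv ⬝ᵥ (P * A) *ᵥ xv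
      = xv ⬝ᵥ (P * B * R⁻¹ * Bᵀ * P) *ᵥ xv - xv ⬝ᵥ Q *ᵥ xv := by
    rw [← dotProduct_add, ← add_mulVec, hRic', sub_mulVec, dotProduct_sub]
  linarith [hsum]


lemma psd_nonneg {n : ℕ} {Q : Matrix (Fin n) (Fin n) ℝ} (hQ : Q.PosSemidef)
    (v : Fin n → ℝ) : 0 ≤ v ⬝ᵥ (Q *ᵥ v) := by simpa using hQ.dotProduct_mulVec_nonneg v

lemma cont_mulVec {n m : ℕ} (M : Matrix (Fin n) (Fin m) ℝ) {f : ℝ → Fin m → ℝ}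
    (hf : Continuous f) : Continuous (fun t => M *ᵥ f t) := by
  apply continuous_pi; intro i
  simp only [mulVec, dotProduct]
  exact continuous_finset_sum _ fun j _ =>
    continuous_const.mul ((continuous_apply j).comp hf)

lemma cont_dot {k : ℕ} {f g : ℝ → Fin k → ℝ} (hf : Continuous f) (hg : Continuous g) :
    Continuous (fun t => f t ⬝ᵥ g t) := by
  simp only [dotProduct]
  exact continuous_finset_sum _ fun j _ =>
    ((continuous_apply j).comp hf).mul ((continuous_apply j).comp hg)

lemma hasDerivAt_quad {n : ℕ} (P : Matrix (Fin n) (Fin n) ℝ) (x : ℝ → Fin n → ℝ)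
    (v : Fin n → ℝ) (t : ℝ) (hx : HasDerivAt x v t) :
    HasDerivAt (fun s => x s ⬝ᵥ (P *ᵥ x s)) (v ⬝ᵥ (P *ᵥ x t) + x t ⬝ᵥ (P *ᵥ v)) t := by
  have hxi : ∀ i, HasDerivAt (fun s => x s i) (v i) t := fun i => hasDerivAt_pi.mp hx i
  have h1 : ∀ i, HasDerivAt (fun s => (P *ᵥ x s) i) ((P *ᵥ v) i) t := by
    intro i
    simp only [mulVec, dotProduct]
    exact HasDerivAt.fun_sum fun j _ => (hxi j).const_mul (P i j)
  have h2 := HasDerivAt.fun_sum (u := (Finset.univ : Finset (Fin n))) (fun i _ => (hxi i).mul (h1 i))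
  convert h2 using 1
  · rfl
  · rfl
  · funext s; simp [dotProduct, mulVec]
  · simp [dotProduct, mulVec, Finset.sum_add_distrib]

end helpers

theorem stmt_12 (n m : ℕ) (A : Matrix (Fin n) (Fin n) ℝ)
    (B : Matrix (Fin n) (Fin m) ℝ) (Q : Matrix (Fin n) (Fin n) ℝ) (hQ : Q.IsSymm)
    (hQsd : Q.PosSemidef) (R : Matrix (Fin m) (Fin m) ℝ) (hR : R.IsSymm)
    (hRd : R.PosDef) (P : Matrix (Fin n) (Fin n) ℝ) (hP : P.IsSymm)
    (hRic : Q + Aᵀ * P + P * A - P * B * R⁻¹ * Bᵀ * P = 0)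
    (K : Matrix (Fin m) (Fin n) ℝ) (hK : K = R⁻¹ * Bᵀ * P)
    (x : ℝ → Fin n → ℝ) (u : ℝ → Fin m → ℝ)
    (hxdiff : Differentiable ℝ x) (hucont : Continuous u)
    (hode : ∀ t : ℝ, 0 ≤ t → deriv x t = A *ᵥ x t + B *ᵥ u t)
    (hint : MeasureTheory.IntegrableOn
      (fun t : ℝ => x t ⬝ᵥ (Q *ᵥ x t) + u t ⬝ᵥ (R *ᵥ u t)) (Set.Ici 0))
    (hlim : Filter.Tendsto (fun t : ℝ => x t ⬝ᵥ (P *ᵥ x t)) Filter.atTop (nhds 0)) :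
    x 0 ⬝ᵥ (P *ᵥ x 0) ≤ ∫ t in Set.Ici (0 : ℝ), (x t ⬝ᵥ (Q *ᵥ x t) + u t ⬝ᵥ (R *ᵥ u t)) := by
  set V : ℝ → ℝ := fun t => x t ⬝ᵥ (P *ᵥ x t) with hV
  set c : ℝ → ℝ := fun t => x t ⬝ᵥ (Q *ᵥ x t) + u t ⬝ᵥ (R *ᵥ u t) with hc
  set W : ℝ → ℝ := fun t =>
    (A *ᵥ x t + B *ᵥ u t) ⬝ᵥ (P *ᵥ x t) + x t ⬝ᵥ (P *ᵥ (A *ᵥ x t + B *ᵥ u t)) with hW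
  have hxc : Continuous x := hxdiff.continuous
  have hWcont : Continuous W :=
    (cont_dot ((cont_mulVec A hxc).add (cont_mulVec B hucont)) (cont_mulVec P hxc)).add
      (cont_dot hxc (cont_mulVec P ((cont_mulVec A hxc).add (cont_mulVec B hucont))))
  have hccont : Continuous c :=
    (cont_dot hxc (cont_mulVec Q hxc)).add (cont_dot hucont (cont_mulVec R hucont))
  have hVW : ∀ t : ℝ, 0 ≤ t → HasDerivAt V (W t) t := by
    intro t ht
    have hx : HasDerivAt x (A *ᵥ x t + B *ᵥ u t) t := by
      have := (hxdiff t).hasDerivAt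
      rwa [hode t ht] at this
    exact hasDerivAt_quad P x _ t hx
  have hkey : ∀ t : ℝ, c t + W t = (u t + K *ᵥ x t) ⬝ᵥ (R *ᵥ (u t + K *ᵥ x t)) := by
    intro t
    have := key n m A B Q R hR hRd P hP hRic K hK (x t) (u t)
    simp only [hW, hc]
    linarith [this]
  have hcW_nonneg : ∀ t : ℝ, 0 ≤ c t + W t := fun t => by
    rw [hkey t]; exact psd_nonneg hRd.posSemidef _
  have hc_nonneg : ∀ t : ℝ, 0 ≤ c t := fun t =>
    add_nonneg (psd_nonneg hQsd _) (psd_nonneg hRd.posSemidef _)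
  have hmain : ∀ T : ℝ, 0 ≤ T →
      V 0 - V T ≤ ∫ t in Set.Ici (0 : ℝ), c t := by
    intro T hT
    have hFTC : ∫ s in (0:ℝ)..T, W s = V T - V 0 := by
      apply intervalIntegral.integral_eq_sub_of_hasDerivAt
      · intro t ht
        apply hVW
        rcases Set.mem_uIcc.mp ht with h | h
        · exact h.1
        · linarith [h.1, h.2]
      · exact hWcont.intervalIntegrable 0 T
    have hnn : 0 ≤ ∫ s in (0:ℝ)..T, (c s + W s) :=
      intervalIntegral.integral_nonneg hT (fun t _ => hcW_nonneg t)
    rw [intervalIntegral.integral_add (hccont.intervalIntegrable 0 T)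
      (hWcont.intervalIntegrable 0 T), hFTC] at hnn
    have hle : ∫ s in (0:ℝ)..T, c s ≤ ∫ t in Set.Ici (0 : ℝ), c t := by
      rw [intervalIntegral.integral_of_le hT]
      apply MeasureTheory.setIntegral_mono_set hint
      · exact MeasureTheory.ae_of_all _ fun t => hc_nonneg t
      · exact MeasureTheory.ae_of_all _ (fun t ht => le_of_lt ht.1)
    linarith
  have htend : Filter.Tendsto (fun T => V 0 - V T) Filter.atTop (nhds (V 0)) := by
    simpa using (tendsto_const_nhds (x := V 0) (f := Filter.atTop)).sub hlim
  have := le_of_tendsto htend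
    (Filter.eventually_atTop.mpr ⟨0, fun T hT => hmain T hT⟩)
  simpa [hV, hc] using this
end
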